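/- Let 𝒜, ℳ ∈ ℂ^{n×n} and ℬ ∈ ℂ^{m×n} with ℬ𝒜 = 0 and ℳ Hermitian positive definite, and let γ > 0. Then the multiset of nonzero eigenvalues of 𝒜ℳ𝒜† + γℬ†ℬ equals the union (as multisets) of the nonzero eigenvalues of 𝒜ℳ𝒜† and γ times the nonzero eigenvalues of ℬ†ℬ. -/

import Mathlib

open Matrix Polynomial
open scoped ComplexOrder

/-- Scaling a matrix by a nonzero scalar scales the roots of its charpoly. -/
lemma charpoly_smul_roots {k : ℕ} (Q : Matrix (Fin k) (Fin k) ℂ) (c : ℂ) (hc : c ≠ 0) :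
    (Matrix.charpoly (c • Q)).roots = (Matrix.charpoly Q).roots.map (fun μ => c * μ) := by
  classical
  set p := Matrix.charpoly Q with hp
  have hmono : p.Monic := Q.charpoly_monic
  have hsplit : p.Splits := IsAlgClosed.splits p
  have hfac : p = (p.roots.map fun r => X - C r).prod :=
    hsplit.eq_prod_roots_of_monic hmono
  -- key identity
  have key : Matrix.charpoly (c • Q) = C (c ^ k) * p.comp (C c⁻¹ * X) := by
    have hdet : p.comp (C c⁻¹ * X)
        = ((eval₂RingHom C (C c⁻¹ * X)).mapMatrix (charmatrix Q)).det := by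
      rw [← RingHom.map_det]
      rfl
    have hmat : (C c) • ((eval₂RingHom C (C c⁻¹ * X)).mapMatrix (charmatrix Q))
        = charmatrix (c • Q) := by
      apply Matrix.ext
      intro i j
      simp only [RingHom.mapMatrix_apply, Matrix.smul_apply, Matrix.map_apply,
        charmatrix_apply, smul_eq_mul, coe_eval₂RingHom, Pi.smul_apply]
      by_cases h : i = j
      · subst h
        rw [Matrix.diagonal_apply_eq, eval₂_sub, eval₂_X, eval₂_C,
          mul_sub, ← mul_assoc, ← C_mul, mul_inv_cancel₀ hc, C_1, one_mul, ← C_mul]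
      · rw [Matrix.diagonal_apply_ne _ h, eval₂_sub, eval₂_C, eval₂_zero, zero_sub, zero_sub,
          mul_neg, ← C_mul]
    calc Matrix.charpoly (c • Q)
        = ((C c) • ((eval₂RingHom C (C c⁻¹ * X)).mapMatrix (charmatrix Q))).det := by
          rw [hmat]; rfl
      _ = C (c ^ k) * p.comp (C c⁻¹ * X) := by
          rw [Matrix.det_smul, ← hdet, Fintype.card_fin, C_pow]
  rw [key, Polynomial.roots_C_mul _ (pow_ne_zero _ hc)]
  -- compute roots of the composition
  have hterm : ∀ r : ℂ, (X - C r).comp (C c⁻¹ * X) = C c⁻¹ * (X - C (c * r)) := by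
    intro r
    rw [sub_comp, X_comp, C_comp, mul_sub, ← C_mul, ← mul_assoc c⁻¹ c r,
      inv_mul_cancel₀ hc, one_mul]
  have hcomp : p.comp (C c⁻¹ * X)
      = (C c⁻¹) ^ Multiset.card p.roots *
        ((p.roots.map (fun μ => c * μ)).map fun r => X - C r).prod := by
    conv_lhs => rw [hfac]
    rw [Polynomial.multiset_prod_comp, Multiset.map_map]
    simp only [Function.comp_def, hterm]
    rw [Multiset.prod_map_mul]
    congr 1
    · simp
    · rw [Multiset.map_map]
      rfl
  rw [hcomp, ← C_pow, Polynomial.roots_C_mul _ (pow_ne_zero _ (inv_ne_zero hc)),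
    Polynomial.roots_multiset_prod_X_sub_C]

/-- If `P * Q = 0 = Q * P` then the charpolys multiply nicely. -/
lemma charpoly_mul_of_mul_eq_zero {k : ℕ} (P Q : Matrix (Fin k) (Fin k) ℂ)
    (h1 : P * Q = 0) (h2 : Q * P = 0) :
    P.charpoly * Q.charpoly = X ^ k * (P + Q).charpoly := by
  set S : Matrix (Fin k) (Fin k) ℂ[X] := Matrix.scalar (Fin k) (X : ℂ[X]) with hS
  set Pm : Matrix (Fin k) (Fin k) ℂ[X] := (C : ℂ →+* ℂ[X]).mapMatrix P with hPm
  set Qm : Matrix (Fin k) (Fin k) ℂ[X] := (C : ℂ →+* ℂ[X]).mapMatrix Q with hQm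
  have h0 : Pm * Qm = 0 := by
    rw [hPm, hQm, ← _root_.map_mul, h1, _root_.map_zero]
  have hcomm : Pm * S = S * Pm :=
    (Matrix.scalar_commute (X : ℂ[X]) (fun r => Commute.all _ _) Pm).symm
  have expand1 : (S - Pm) * (S - Qm) = S * S - S * Qm - Pm * S + Pm * Qm := by
    noncomm_ring
  have expand2 : S * (S - (Pm + Qm)) = S * S - S * Pm - S * Qm := by
    noncomm_ring
  have hmat : charmatrix P * charmatrix Q = S * charmatrix (P + Q) := by
    simp only [charmatrix, _root_.map_add, ← hS, ← hPm, ← hQm]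
    rw [expand1, expand2, h0, hcomm]
    abel
  have hdet := congrArg Matrix.det hmat
  rw [Matrix.det_mul, Matrix.det_mul] at hdet
  have hX : S.det = X ^ k := by
    rw [hS, Matrix.scalar_apply, Matrix.det_diagonal]
    simp
  rw [Matrix.charpoly, Matrix.charpoly, Matrix.charpoly, hdet, hX]

theorem kernel_compensation_spectrum (n m : ℕ) [DecidableEq ℂ]
    (A M : Matrix (Fin n) (Fin n) ℂ) (B : Matrix (Fin m) (Fin n) ℂ)
    (hBA : B * A = 0) (hM : M.PosDef) (γ : ℝ) (hγ : 0 < γ) :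
    ((A * M * Aᴴ + (γ : ℂ) • (Bᴴ * B)).charpoly.roots.filter (· ≠ 0))
      = ((A * M * Aᴴ).charpoly.roots.filter (· ≠ 0))
        + (((Bᴴ * B).charpoly.roots.map (fun μ => (γ : ℂ) * μ)).filter (· ≠ 0)) := by
  have hγ' : (γ : ℂ) ≠ 0 := Complex.ofReal_ne_zero.mpr hγ.ne'
  set P := A * M * Aᴴ with hP
  set Q := (γ : ℂ) • (Bᴴ * B) with hQ
  have hAB : Aᴴ * Bᴴ = 0 := by rw [← conjTranspose_mul, hBA, conjTranspose_zero]
  have hPQ : P * Q = 0 := by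
    rw [hP, hQ, Matrix.mul_smul, Matrix.mul_assoc (A * M) Aᴴ (Bᴴ * B),
      ← Matrix.mul_assoc Aᴴ Bᴴ B, hAB, Matrix.zero_mul, Matrix.mul_zero, smul_zero]
  have hQP : Q * P = 0 := by
    rw [hP, hQ, Matrix.smul_mul, Matrix.mul_assoc Bᴴ B (A * M * Aᴴ),
      show B * (A * M * Aᴴ) = (B * A) * (M * Aᴴ) by
        rw [Matrix.mul_assoc B A (M * Aᴴ), ← Matrix.mul_assoc A M Aᴴ],
      hBA, Matrix.zero_mul, Matrix.mul_zero, smul_zero]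
  have hkey := charpoly_mul_of_mul_eq_zero P Q hPQ hQP
  have hPne : P.charpoly ≠ 0 := P.charpoly_monic.ne_zero
  have hQne : Q.charpoly ≠ 0 := Q.charpoly_monic.ne_zero
  have hroots : P.charpoly.roots + Q.charpoly.roots
      = n • ({0} : Multiset ℂ) + (P + Q).charpoly.roots := by
    rw [← Polynomial.roots_mul (mul_ne_zero hPne hQne), hkey,
      Polynomial.roots_mul (mul_ne_zero (pow_ne_zero _ Polynomial.X_ne_zero)
        (P + Q).charpoly_monic.ne_zero),
      Polynomial.roots_pow, Polynomial.roots_X]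
  have hfilter := congrArg (Multiset.filter (· ≠ (0 : ℂ))) hroots
  rw [Multiset.filter_add, Multiset.filter_add] at hfilter
  have hzero : Multiset.filter (· ≠ (0 : ℂ)) (n • ({0} : Multiset ℂ)) = 0 := by
    rw [Multiset.nsmul_singleton]
    refine Multiset.filter_eq_nil.mpr ?_
    intro a ha
    simp [Multiset.eq_of_mem_replicate ha]
  rw [hzero, zero_add] at hfilter
  rw [← charpoly_smul_roots (Bᴴ * B) (γ : ℂ) hγ', ← hQ, ← hfilter]
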